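/- For a stochastically stationary random state ρ and any τ-invariant set Γ ∈ 𝓕 ⊗ Σ, the quenched probability of the ω-section is ℙ-a.s. constant and equals the annealed probability: ℚ_{ρ;ω}(Γ^ω) = ℚ̄_ρ(Γ) for ℙ-almost every ω. -/

import Mathlib

open MeasureTheory Matrix Filter
open scoped ComplexOrder ENNReal

/-- Cylinder set of sequences whose first n coordinates equal a given word. -/
def cyl {𝒜 : Type*} (n : ℕ) (w : Fin n → 𝒜) : Set (ℕ → 𝒜) :=
  {x | ∀ i : Fin n, x i = w i}

/-- V_{n;ω}(a_1,…,a_n) = v_{a_n; θⁿ(ω)} ⋯ v_{a_1; θ(ω)}. -/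
noncomputable def Vq {Ω 𝒜 : Type*} {d : ℕ} (v : Ω → 𝒜 → Matrix (Fin d) (Fin d) ℂ)
    (θ : Ω → Ω) (ω : Ω) : (n : ℕ) → (Fin n → 𝒜) → Matrix (Fin d) (Fin d) ℂ
  | 0, _ => 1
  | n + 1, w => v (θ^[n + 1] ω) (w (Fin.last n)) * Vq v θ ω n (fun i => w i.castSucc)

/-- The left shift σ on 𝒜^ℕ. -/
def shiftSeq {𝒜 : Type*} (x : ℕ → 𝒜) : ℕ → 𝒜 := fun k => x (k + 1)

/-- The skew shift τ(ω, ā) = (θ(ω), σ(ā)). -/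
def tau {Ω 𝒜 : Type*} (θ : Ω → Ω) : Ω × (ℕ → 𝒜) → Ω × (ℕ → 𝒜) :=
  fun p => (θ p.1, shiftSeq p.2)

/-- The annealed quantum measure ℚ̄(Γ) = ∫_Ω ℚ_ω(Γ^ω) dℙ(ω). -/
noncomputable def annealed {Ω 𝒜 : Type*} [MeasurableSpace Ω] [MeasurableSpace 𝒜] (μ : Measure Ω)
    (Q : Ω → Measure (ℕ → 𝒜)) (Γ : Set (Ω × (ℕ → 𝒜))) : ℝ≥0∞ :=
  ∫⁻ ω, Q ω {x | (ω, x) ∈ Γ} ∂μ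

/-! ### Auxiliary lemmas -/

section Cyl

variable {𝒜 : Type*}

/-- The collection of all cylinder sets. -/
def cylSys (𝒜 : Type*) : Set (Set (ℕ → 𝒜)) := {s | ∃ n, ∃ w : Fin n → 𝒜, s = cyl n w}

lemma measurableSet_cyl [MeasurableSpace 𝒜] [MeasurableSingletonClass 𝒜]
    (n : ℕ) (w : Fin n → 𝒜) : MeasurableSet (cyl n w) := by
  have h : cyl n w = ⋂ i : Fin n, (fun x : ℕ → 𝒜 => x i) ⁻¹' {w i} := by
    ext x; simp [cyl]
  rw [h]
  exact MeasurableSet.iInter fun i =>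
    (measurable_pi_apply _) (measurableSet_singleton _)

lemma cyl_inter_of_le {n m : ℕ} (h : n ≤ m) (w : Fin n → 𝒜) (u : Fin m → 𝒜)
    (hne : (cyl n w ∩ cyl m u).Nonempty) : cyl n w ∩ cyl m u = cyl m u := by
  obtain ⟨x, hxw, hxu⟩ := hne
  refine Set.Subset.antisymm Set.inter_subset_right (fun y hy => ⟨fun i => ?_, hy⟩)
  have hlt : (i : ℕ) < m := lt_of_lt_of_le i.2 h
  have h1 : y (i : ℕ) = u ⟨i, hlt⟩ := hy ⟨i, hlt⟩
  have h2 : x (i : ℕ) = u ⟨i, hlt⟩ := hxu ⟨i, hlt⟩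
  have h3 : x (i : ℕ) = w i := hxw i
  rw [h1, ← h2, h3]

lemma isPiSystem_cylSys : IsPiSystem (cylSys 𝒜) := by
  rintro s ⟨n, w, rfl⟩ t ⟨m, u, rfl⟩ hne
  rcases le_total n m with h | h
  · exact ⟨m, u, cyl_inter_of_le h w u hne⟩
  · refine ⟨n, w, ?_⟩
    rw [Set.inter_comm]
    exact cyl_inter_of_le h u w (by rwa [Set.inter_comm])

lemma generateFrom_cylSys (𝒜 : Type*) [Fintype 𝒜] [MeasurableSpace 𝒜]
    [MeasurableSingletonClass 𝒜] :
    (inferInstance : MeasurableSpace (ℕ → 𝒜)) = MeasurableSpace.generateFrom (cylSys 𝒜) := by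
  have hev : ∀ i : ℕ,
      @Measurable _ _ (MeasurableSpace.generateFrom (cylSys 𝒜)) _ (fun x : ℕ → 𝒜 => x i) := by
    intro i s _
    have h : (fun x : ℕ → 𝒜 => x i) ⁻¹' s =
        ⋃ (w : Fin (i + 1) → 𝒜) (_ : w (Fin.last i) ∈ s), cyl (i + 1) w := by
      ext x
      simp only [Set.mem_preimage, Set.mem_iUnion, cyl, Set.mem_setOf_eq]
      constructor
      · intro hx
        exact ⟨fun j => x j, by simpa using hx, fun j => rfl⟩
      · rintro ⟨w, hw, hxw⟩
        have h1 : x ((Fin.last i : Fin (i + 1)) : ℕ) = w (Fin.last i) := hxw (Fin.last i)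
        simp only [Fin.val_last] at h1
        rwa [h1]
    rw [h]
    exact MeasurableSet.iUnion fun w => MeasurableSet.iUnion fun _ =>
      MeasurableSpace.measurableSet_generateFrom ⟨i + 1, w, rfl⟩
  refine le_antisymm ?_ (MeasurableSpace.generateFrom_le ?_)
  · exact iSup_le fun i => measurable_iff_comap_le.mp (hev i)
  · rintro s ⟨n, w, rfl⟩
    exact measurableSet_cyl n w

lemma measurable_shiftSeq [MeasurableSpace 𝒜] :
    Measurable (shiftSeq : (ℕ → 𝒜) → ℕ → 𝒜) :=
  measurable_pi_iff.mpr fun _ => measurable_pi_apply _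

lemma shiftSeq_preimage_cyl (n : ℕ) (w : Fin n → 𝒜) :
    shiftSeq ⁻¹' cyl n w = ⋃ a : 𝒜, cyl (n + 1) (Fin.cons a w) := by
  ext x
  simp only [Set.mem_preimage, Set.mem_iUnion, cyl, Set.mem_setOf_eq, shiftSeq]
  constructor
  · intro h
    refine ⟨x 0, fun i => ?_⟩
    refine Fin.cases ?_ (fun j => ?_) i
    · simp
    · simpa using h j
  · rintro ⟨a, h⟩ i
    simpa using h i.succ

lemma pairwise_disjoint_cyl_cons (n : ℕ) (w : Fin n → 𝒜) :
    Pairwise (Function.onFun Disjoint fun a : 𝒜 => cyl (n + 1) (Fin.cons a w)) := by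
  intro a b hab
  refine Set.disjoint_left.mpr fun x hxa hxb => hab ?_
  have h0a := hxa 0
  have h0b := hxb 0
  simp only [Fin.cons_zero, Fin.val_zero] at h0a h0b
  rw [← h0a, ← h0b]

end Cyl

lemma Vq_cons {Ω 𝒜 : Type*} {d : ℕ} (v : Ω → 𝒜 → Matrix (Fin d) (Fin d) ℂ) (θ : Ω → Ω)
    (ω : Ω) : ∀ (n : ℕ) (a : 𝒜) (w : Fin n → 𝒜),
    Vq v θ ω (n + 1) (Fin.cons a w) = Vq v θ (θ ω) n w * v (θ ω) a := by
  intro n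
  induction n with
  | zero =>
    intro a w
    simp [Vq]
  | succ n ih =>
    intro a w
    have hw : (fun i : Fin (n + 1) => (Fin.cons a w : Fin (n + 2) → 𝒜) i.castSucc) =
        Fin.cons a (fun i : Fin n => w i.castSucc) := by
      funext i
      refine Fin.cases ?_ (fun j => ?_) i
      · simp
      · rw [← Fin.succ_castSucc, Fin.cons_succ, Fin.cons_succ]
    show v (θ^[n + 2] ω) ((Fin.cons a w : Fin (n + 2) → 𝒜) (Fin.last (n + 1))) *
        Vq v θ ω (n + 1) (fun i => (Fin.cons a w : Fin (n + 2) → 𝒜) i.castSucc) = _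
    rw [hw, ih a (fun i : Fin n => w i.castSucc)]
    have hlast : (Fin.cons a w : Fin (n + 2) → 𝒜) (Fin.last (n + 1)) = w (Fin.last n) := by
      rw [← Fin.succ_last, Fin.cons_succ]
    rw [hlast]
    have hiter : θ^[n + 2] ω = θ^[n + 1] (θ ω) := Function.iterate_succ_apply θ (n + 1) ω
    rw [hiter]
    show _ = Vq v θ (θ ω) (n + 1) w * v (θ ω) a
    simp only [Vq, mul_assoc]

lemma trace_re_nonneg_of_posSemidef {d : ℕ} {M : Matrix (Fin d) (Fin d) ℂ}
    (hM : M.PosSemidef) : 0 ≤ M.trace.re := by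
  have hdiag : ∀ i, 0 ≤ M i i := by
    intro i
    exact hM.diag_nonneg
  have htr : 0 ≤ M.trace := by
    rw [Matrix.trace]
    exact Finset.sum_nonneg fun i _ => hdiag i
  simpa using (Complex.le_def.mp htr).1

lemma sum_ofReal_trace {d : ℕ} {𝒜 : Type*} [Fintype 𝒜] (W : Matrix (Fin d) (Fin d) ℂ)
    (u : 𝒜 → Matrix (Fin d) (Fin d) ℂ) (ρ0 ρ1 : Matrix (Fin d) (Fin d) ℂ)
    (hst : ∑ a, u a * ρ0 * (u a)ᴴ = ρ1) (hpsd : ρ0.PosSemidef) :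
    ∑ a, ENNReal.ofReal ((W * u a * ρ0 * (W * u a)ᴴ).trace.re)
      = ENNReal.ofReal ((W * ρ1 * Wᴴ).trace.re) := by
  have hpsd' : ∀ a : 𝒜, (W * u a * ρ0 * (W * u a)ᴴ).PosSemidef := fun a =>
    hpsd.mul_mul_conjTranspose_same (W * u a)
  rw [← ENNReal.ofReal_sum_of_nonneg (fun a _ => trace_re_nonneg_of_posSemidef (hpsd' a))]
  congr 1
  rw [← Complex.re_sum, ← Matrix.trace_sum]
  congr 2
  calc ∑ a, W * u a * ρ0 * (W * u a)ᴴ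
      = ∑ a, W * (u a * ρ0 * (u a)ᴴ) * Wᴴ := by
        refine Finset.sum_congr rfl fun a _ => ?_
        rw [Matrix.conjTranspose_mul]
        simp only [mul_assoc]
    _ = W * (∑ a, u a * ρ0 * (u a)ᴴ) * Wᴴ := by
        rw [Finset.mul_sum, ← Finset.sum_mul]
    _ = W * ρ1 * Wᴴ := by rw [hst]

/-- For a stochastically stationary random state ρ and any τ-invariant set Γ, the quenched
probability of the ω-section is ℙ-a.s. constant and equals the annealed probability. -/
theorem stmt10 {Ω 𝒜 : Type*} {d : ℕ} [Fintype 𝒜] [MeasurableSpace 𝒜]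
    [MeasurableSingletonClass 𝒜]
    [MeasurableSpace Ω] (μ : Measure Ω) [IsProbabilityMeasure μ]
    (θ θinv : Ω → Ω) (hθ : Ergodic θ μ)
    (hinvm : Measurable θinv) (hli : Function.LeftInverse θinv θ)
    (hri : Function.RightInverse θinv θ)
    (v : Ω → 𝒜 → Matrix (Fin d) (Fin d) ℂ)
    (hvmeas : ∀ a i j, Measurable fun ω => v ω a i j)
    (hv : ∀ᵐ ω ∂μ, ∑ a, (v ω a)ᴴ * v ω a = 1)
    (ρ : Ω → Matrix (Fin d) (Fin d) ℂ)
    (hρmeas : ∀ i j, Measurable fun ω => ρ ω i j)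
    (hρ : ∀ᵐ ω ∂μ, (ρ ω).PosSemidef ∧ (ρ ω).trace = 1)
    (hstat : ∀ᵐ ω ∂μ, ∑ a, v (θ ω) a * ρ ω * (v (θ ω) a)ᴴ = ρ (θ ω))
    (Q : Ω → Measure (ℕ → 𝒜)) (hQp : ∀ ω, IsProbabilityMeasure (Q ω))
    (hQmeas : ∀ E : Set (ℕ → 𝒜), MeasurableSet E → Measurable fun ω => Q ω E)
    (hQcyl : ∀ n (w : Fin n → 𝒜), ∀ᵐ ω ∂μ,
      Q ω (cyl n w) = ENNReal.ofReal
        (Matrix.trace (Vq v θ ω n w * ρ ω * (Vq v θ ω n w)ᴴ)).re)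
    (Γ : Set (Ω × (ℕ → 𝒜))) (hΓ : MeasurableSet Γ) (hΓinv : tau θ ⁻¹' Γ = Γ) :
    ∀ᵐ ω ∂μ, Q ω {x | (ω, x) ∈ Γ} = annealed μ Q Γ := by
  classical
  -- the quenched probability of the section, as a function of ω
  set g : Ω → ℝ≥0∞ := fun ω => Q ω {x | (ω, x) ∈ Γ} with hg
  -- measurability of g, via the kernel machinery
  have hQm : Measurable Q := Measure.measurable_of_measurable_coe _ hQmeas
  let κ : ProbabilityTheory.Kernel Ω (ℕ → 𝒜) := ⟨Q, hQm⟩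
  haveI : ProbabilityTheory.IsMarkovKernel κ := ⟨fun a => hQp a⟩
  have hgmeas : Measurable g := by
    have := ProbabilityTheory.Kernel.measurable_kernel_prodMk_left (κ := κ) hΓ
    exact this
  -- pull back a.e. statements through θ
  have hpull : ∀ {p : Ω → Prop}, (∀ᵐ ω ∂μ, p ω) → (∀ᵐ ω ∂μ, p (θ ω)) := fun h =>
    hθ.toMeasurePreserving.quasiMeasurePreserving.ae h
  -- the countable collection of cylinder identities, a.e.
  have h1 : ∀ᵐ ω ∂μ, ∀ (n : ℕ) (w : Fin n → 𝒜), Q ω (cyl n w) = ENNReal.ofReal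
      (Matrix.trace (Vq v θ ω n w * ρ ω * (Vq v θ ω n w)ᴴ)).re :=
    ae_all_iff.mpr fun n => ae_all_iff.mpr fun w => hQcyl n w
  have h2 : ∀ᵐ ω ∂μ, ∀ (n : ℕ) (w : Fin n → 𝒜), Q (θ ω) (cyl n w) = ENNReal.ofReal
      (Matrix.trace (Vq v θ (θ ω) n w * ρ (θ ω) * (Vq v θ (θ ω) n w)ᴴ)).re := hpull h1
  -- key: a.e., map shiftSeq (Q ω) = Q (θ ω)
  have key : ∀ᵐ ω ∂μ, Measure.map shiftSeq (Q ω) = Q (θ ω) := by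
    filter_upwards [h1, h2, hstat, hρ] with ω hc1 hc2 hst hρω
    haveI := hQp ω
    haveI := hQp (θ ω)
    haveI : IsProbabilityMeasure (Measure.map shiftSeq (Q ω)) :=
      Measure.isProbabilityMeasure_map measurable_shiftSeq.aemeasurable
    refine ext_of_generate_finite (cylSys 𝒜) (generateFrom_cylSys 𝒜) isPiSystem_cylSys ?_ ?_
    · rintro s ⟨n, w, rfl⟩
      rw [Measure.map_apply measurable_shiftSeq (measurableSet_cyl n w),
        shiftSeq_preimage_cyl n w,
        measure_iUnion (pairwise_disjoint_cyl_cons n w) (fun a => measurableSet_cyl _ _),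
        tsum_fintype]
      have hterm : ∀ a : 𝒜, Q ω (cyl (n + 1) (Fin.cons a w)) = ENNReal.ofReal
          ((Vq v θ (θ ω) n w * v (θ ω) a * ρ ω *
            (Vq v θ (θ ω) n w * v (θ ω) a)ᴴ).trace.re) := by
        intro a
        rw [hc1 (n + 1) (Fin.cons a w), Vq_cons]
      rw [Finset.sum_congr rfl fun a _ => hterm a,
        sum_ofReal_trace (Vq v θ (θ ω) n w) (fun a => v (θ ω) a) (ρ ω) (ρ (θ ω)) hst hρω.1,
        hc2 n w]
    · simp [measure_univ]
  -- g is a.e. invariant under θ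
  have hinv : g ∘ θ =ᵐ[μ] g := by
    filter_upwards [key] with ω hk
    have hsec : (Prod.mk ω ⁻¹' Γ) = shiftSeq ⁻¹' (Prod.mk (θ ω) ⁻¹' Γ) := by
      ext x
      constructor
      · intro hx
        have hx2 : (ω, x) ∈ tau θ ⁻¹' Γ := by rwa [hΓinv]
        exact hx2
      · intro hx
        have hx2 : (ω, x) ∈ tau θ ⁻¹' Γ := hx
        rwa [hΓinv] at hx2
    show Q (θ ω) (Prod.mk (θ ω) ⁻¹' Γ) = Q ω (Prod.mk ω ⁻¹' Γ)
    rw [hsec, ← Measure.map_apply measurable_shiftSeq (measurable_prodMk_left hΓ), hk]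
  -- ergodicity: g is a.e. constant
  obtain ⟨c, hc⟩ := hθ.ae_eq_const_of_ae_eq_comp₀ hgmeas.nullMeasurable hinv
  -- the constant equals the annealed probability
  have hann : annealed μ Q Γ = c := by
    rw [annealed]
    rw [lintegral_congr_ae hc]
    simp [lintegral_const, measure_univ]
  filter_upwards [hc] with ω hω
  rw [show Q ω {x | (ω, x) ∈ Γ} = g ω from rfl, hω, hann]
  rfl
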